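/- Semigroup property of the flow: for input signals u1, u2 ∈ U, φ_{x0}(u1u2) = φ_{x0}(u1)·φ_{y}(u2) (concatenation of trajectories), where y = [φ_{x0}(u1)](τ(u1)); i.e., the solution of the integral equation driven by the concatenated input equals the concatenation of the solution driven by u1 from x0 and the solution driven by u2 from the terminal state of the first. -/

import Mathlib

open MeasureTheory Set Filter

lemma gronwall_zero {g : ℝ → ℝ} {T C L : ℝ} (hL : 0 ≤ L)
    (hgi : IntegrableOn g (Icc 0 T))
    (hb : ∀ t ∈ Icc (0:ℝ) T, g t ≤ C)
    (hnn : ∀ t ∈ Icc (0:ℝ) T, 0 ≤ g t)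
    (hrec : ∀ t ∈ Icc (0:ℝ) T, g t ≤ L * ∫ s in Icc (0:ℝ) t, g s) :
    ∀ t ∈ Icc (0:ℝ) T, g t = 0 := by
  have key : ∀ k : ℕ, ∀ t ∈ Icc (0:ℝ) T, g t ≤ C * (L * t) ^ k / k.factorial := by
    intro k
    induction k with
    | zero => simpa using hb
    | succ k ih =>
      intro t ht
      have ht0 : (0:ℝ) ≤ t := ht.1
      have h1 : ∫ s in Icc (0:ℝ) t, g s ≤ ∫ s in Icc (0:ℝ) t, C * (L * s) ^ k / k.factorial := by
        refine setIntegral_mono_on (hgi.mono_set (Icc_subset_Icc le_rfl ht.2)) ?_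
          measurableSet_Icc (fun s hs => ih s ⟨hs.1, hs.2.trans ht.2⟩)
        exact (Continuous.continuousOn (by fun_prop)).integrableOn_Icc
      have h2 : ∫ s in Icc (0:ℝ) t, C * (L * s) ^ k / k.factorial
          = (C * L ^ k / k.factorial) * (t ^ (k+1) / (k+1)) := by
        rw [integral_Icc_eq_integral_Ioc, ← intervalIntegral.integral_of_le ht0]
        have : ∀ s : ℝ, C * (L * s) ^ k / k.factorial = (C * L ^ k / k.factorial) * s ^ k := by
          intro s; rw [mul_pow]; ring
        simp_rw [this]
        rw [intervalIntegral.integral_const_mul, integral_pow]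
        norm_num
      have h4 : g t ≤ L * ((C * L ^ k / k.factorial) * (t ^ (k+1) / (k+1))) := by
        calc g t ≤ L * ∫ s in Icc (0:ℝ) t, g s := hrec t ht
        _ ≤ L * ((C * L ^ k / k.factorial) * (t ^ (k+1) / (k+1))) := by
            rw [← h2]; exact mul_le_mul_of_nonneg_left h1 hL
      refine h4.trans (le_of_eq ?_)
      rw [Nat.factorial_succ, mul_pow]
      have hk : (k.factorial : ℝ) ≠ 0 := by positivity
      have hk1 : ((k:ℝ) + 1) ≠ 0 := by positivity
      push_cast
      field_simp
      ring
  intro t ht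
  have hto : Tendsto (fun k : ℕ => C * (L * t) ^ k / k.factorial) atTop (nhds 0) := by
    have h := (FloorSemiring.tendsto_pow_div_factorial_atTop (K := ℝ) (L * t)).const_mul C
    simpa [mul_div_assoc] using h
  exact le_antisymm (ge_of_tendsto' hto (fun k => key k t ht)) (hnn t ht)

/-- The concatenation of two time-parameterized functions, splitting at time `τ₁`. -/
noncomputable def concatFn {E : Type*} (τ₁ : ℝ) (h₁ h₂ : ℝ → E) : ℝ → E :=
  fun t => if t < τ₁ then h₁ t else h₂ (t - τ₁)

/-- Semigroup property of the flow: the solution driven by the concatenated input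
`u₁u₂` equals the concatenation of the solution driven by `u₁` from `x₀` and the
solution driven by `u₂` from the terminal state `y = [φ_{x₀}(u₁)](τ(u₁))`. -/
theorem flow_concatenation {n m : ℕ}
    (f : EuclideanSpace ℝ (Fin n) → EuclideanSpace ℝ (Fin m) → EuclideanSpace ℝ (Fin n))
    (Lf : NNReal) (hfLip : ∀ w, LipschitzWith Lf (fun x => f x w))
    (hfMeas : ∀ x, Measurable (f x))
    (M : ℝ) (hfBdd : ∀ x w, ‖f x w‖ ≤ M)
    (τ₁ τ₂ : ℝ) (hτ₁ : 0 < τ₁) (hτ₂ : 0 < τ₂)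
    (u₁ u₂ : ℝ → EuclideanSpace ℝ (Fin m))
    (hu₁ : Measurable u₁) (hu₂ : Measurable u₂)
    (x₁ x₂ x : ℝ → EuclideanSpace ℝ (Fin n))
    (x₀ : EuclideanSpace ℝ (Fin n))
    -- `x₁ = φ_{x₀}(u₁)` on `[0, τ₁]`
    (hx₁c : ContinuousOn x₁ (Icc (0 : ℝ) τ₁))
    (hx₁ : ∀ t ∈ Icc (0 : ℝ) τ₁, x₁ t = x₀ + ∫ s in Icc (0 : ℝ) t, f (x₁ s) (u₁ s))
    -- `x₂ = φ_y(u₂)` on `[0, τ₂]` with `y = x₁ τ₁`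
    (hx₂c : ContinuousOn x₂ (Icc (0 : ℝ) τ₂))
    (hx₂ : ∀ t ∈ Icc (0 : ℝ) τ₂,
      x₂ t = x₁ τ₁ + ∫ s in Icc (0 : ℝ) t, f (x₂ s) (u₂ s))
    -- `x = φ_{x₀}(u₁u₂)` on `[0, τ₁ + τ₂]`
    (hxc : ContinuousOn x (Icc (0 : ℝ) (τ₁ + τ₂)))
    (hx : ∀ t ∈ Icc (0 : ℝ) (τ₁ + τ₂),
      x t = x₀ + ∫ s in Icc (0 : ℝ) t, f (x s) (concatFn τ₁ u₁ u₂ s)) :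
    ∀ t ∈ Icc (0 : ℝ) (τ₁ + τ₂), x t = concatFn τ₁ x₁ x₂ t := by
  set T : ℝ := τ₁ + τ₂ with hT
  set z : ℝ → EuclideanSpace ℝ (Fin n) := concatFn τ₁ x₁ x₂ with hzdef
  set w : ℝ → EuclideanSpace ℝ (Fin m) := concatFn τ₁ u₁ u₂ with hwdef
  have hτ₁T : τ₁ ≤ T := by simp [hT]; linarith
  have hT0 : (0:ℝ) ≤ T := by positivity
  have hM : 0 ≤ M := le_trans (norm_nonneg _) (hfBdd x₀ (u₁ 0))
  -- measurability of the uncurried f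
  have hF : Measurable (Function.uncurry f) :=
    measurable_uncurry_of_continuous_of_measurable
      (fun v => (hfLip v).continuous) hfMeas
  have hw : Measurable w := by
    apply Measurable.ite (measurableSet_lt measurable_id measurable_const) hu₁
    exact hu₂.comp (measurable_id.sub measurable_const)
  -- a.e. strong measurability of z on [0, T]
  have hz_meas : AEStronglyMeasurable z (volume.restrict (Icc (0:ℝ) T)) := by
    have h1 : AEStronglyMeasurable z (volume.restrict (Ico (0:ℝ) τ₁)) := by
      refine ((hx₁c.mono Ico_subset_Icc_self).aestronglyMeasurable measurableSet_Ico).congr ?_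
      refine ((ae_restrict_iff' measurableSet_Ico).2 (ae_of_all _ fun s hs => ?_))
      simp [hzdef, concatFn, hs.2]
    have h2 : AEStronglyMeasurable z (volume.restrict (Icc τ₁ T)) := by
      have hc : ContinuousOn (fun s => x₂ (s - τ₁)) (Icc τ₁ T) := by
        apply hx₂c.comp ((continuous_id.sub continuous_const).continuousOn)
        intro s hs
        simp only [id_eq, mem_Icc, Pi.sub_apply] at hs ⊢
        exact ⟨by linarith [hs.1], by linarith [hs.2, hT]⟩
      refine (hc.aestronglyMeasurable measurableSet_Icc).congr ?_
      refine ((ae_restrict_iff' measurableSet_Icc).2 (ae_of_all _ fun s hs => ?_))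
      simp [hzdef, concatFn, not_lt.2 hs.1]
    have hsub : Icc (0:ℝ) T ⊆ Ico 0 τ₁ ∪ Icc τ₁ T := by
      intro s hs
      rcases lt_or_ge s τ₁ with h | h
      · exact Or.inl ⟨hs.1, h⟩
      · exact Or.inr ⟨h, hs.2⟩
    refine AEStronglyMeasurable.mono_measure ?_
      ((Measure.restrict_mono hsub le_rfl).trans (Measure.restrict_union_le _ _))
    exact h1.add_measure h2
  have hx_meas : AEStronglyMeasurable x (volume.restrict (Icc (0:ℝ) T)) :=
    hxc.aestronglyMeasurable measurableSet_Icc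
  -- integrability helper
  have key : ∀ (s : Set ℝ), MeasurableSet s → volume s < ⊤ →
      ∀ (y : ℝ → EuclideanSpace ℝ (Fin n)) (v : ℝ → EuclideanSpace ℝ (Fin m)),
      AEStronglyMeasurable y (volume.restrict s) → Measurable v →
      IntegrableOn (fun r => f (y r) (v r)) s := by
    intro s hs hsf y v hy hv
    have hsm : AEStronglyMeasurable (fun r => f (y r) (v r)) (volume.restrict s) := by
      have : AEMeasurable (fun r => (y r, v r)) (volume.restrict s) :=
        hy.aemeasurable.prodMk hv.aemeasurable
      exact (hF.comp_aemeasurable this).aestronglyMeasurable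
    refine Integrable.mono' ((integrableOn_const_iff (C := M)).2 (Or.inr hsf)) hsm ?_
    exact ae_of_all _ fun r => hfBdd _ _
  have hvolIcc : ∀ a b : ℝ, volume (Icc a b) < ⊤ := fun a b => by
    rw [Real.volume_Icc]; exact ENNReal.ofReal_lt_top
  have hvolIoc : ∀ a b : ℝ, volume (Ioc a b) < ⊤ := fun a b => by
    rw [Real.volume_Ioc]; exact ENNReal.ofReal_lt_top
  -- x₂ 0 = x₁ τ₁
  have h20 : x₂ 0 = x₁ τ₁ := by
    have := hx₂ 0 ⟨le_refl 0, hτ₂.le⟩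
    simpa [Icc_self, Measure.restrict_singleton, Real.volume_singleton] using this
  -- z satisfies the same integral equation
  have hz : ∀ t ∈ Icc (0:ℝ) T, z t = x₀ + ∫ s in Icc (0:ℝ) t, f (z s) (w s) := by
    intro t ht
    by_cases hlt : t < τ₁
    · have heq : EqOn (fun s => f (z s) (w s)) (fun s => f (x₁ s) (u₁ s)) (Icc 0 t) := by
        intro s hs
        have : s < τ₁ := lt_of_le_of_lt hs.2 hlt
        simp [hzdef, hwdef, concatFn, this]
      rw [setIntegral_congr_fun measurableSet_Icc heq]
      have : z t = x₁ t := by simp [hzdef, concatFn, hlt]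
      rw [this]
      exact hx₁ t ⟨ht.1, hlt.le⟩
    · push_neg at hlt
      have htT : t ≤ T := ht.2
      have ht₂ : t - τ₁ ∈ Icc (0:ℝ) τ₂ := ⟨by linarith, by simp [hT] at htT; linarith⟩
      have hzt : z t = x₂ (t - τ₁) := by simp [hzdef, concatFn, not_lt.2 hlt]
      -- split the integral
      have hsplit : Icc (0:ℝ) t = Icc 0 τ₁ ∪ Ioc τ₁ t := (Icc_union_Ioc_eq_Icc hτ₁.le hlt).symm
      have hdisj : Disjoint (Icc (0:ℝ) τ₁) (Ioc τ₁ t) := by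
        apply Set.disjoint_left.2
        intro a ha ha'
        exact absurd ha.2 (not_le.2 ha'.1)
      have hi1 : IntegrableOn (fun s => f (z s) (w s)) (Icc (0:ℝ) τ₁) :=
        key _ measurableSet_Icc (hvolIcc _ _) z w
          (hz_meas.mono_measure (Measure.restrict_mono (Icc_subset_Icc le_rfl hτ₁T) le_rfl)) hw
      have hi2 : IntegrableOn (fun s => f (z s) (w s)) (Ioc τ₁ t) :=
        key _ measurableSet_Ioc (hvolIoc _ _) z w
          (hz_meas.mono_measure (Measure.restrict_mono
            ((Ioc_subset_Icc_self).trans (Icc_subset_Icc (by linarith) htT)) le_rfl)) hw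
      have hI : ∫ s in Icc (0:ℝ) t, f (z s) (w s)
          = (∫ s in Icc (0:ℝ) τ₁, f (z s) (w s)) + ∫ s in Ioc τ₁ t, f (z s) (w s) := by
        rw [hsplit]
        exact setIntegral_union hdisj measurableSet_Ioc hi1 hi2
      have hI1 : ∫ s in Icc (0:ℝ) τ₁, f (z s) (w s) = ∫ s in Icc (0:ℝ) τ₁, f (x₁ s) (u₁ s) := by
        refine setIntegral_congr_ae measurableSet_Icc ?_
        have hae : ∀ᵐ s : ℝ, s ≠ τ₁ := by
          have : volume ({τ₁} : Set ℝ) = 0 := Real.volume_singleton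
          exact ae_iff.2 (by simpa using this)
        filter_upwards [hae] with s hs hmem
        have : s < τ₁ := lt_of_le_of_ne hmem.2 hs
        simp [hzdef, hwdef, concatFn, this]
      have hI2 : ∫ s in Ioc τ₁ t, f (z s) (w s) = ∫ s in Icc (0:ℝ) (t - τ₁), f (x₂ s) (u₂ s) := by
        have heq : EqOn (fun s => f (z s) (w s))
            (fun s => f (x₂ (s - τ₁)) (u₂ (s - τ₁))) (Ioc τ₁ t) := by
          intro s hs
          simp [hzdef, hwdef, concatFn, not_lt.2 hs.1.le]
        rw [setIntegral_congr_fun measurableSet_Ioc heq,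
          ← intervalIntegral.integral_of_le hlt,
          intervalIntegral.integral_comp_sub_right (fun s => f (x₂ s) (u₂ s)) τ₁,
          sub_self, intervalIntegral.integral_of_le (by linarith : (0:ℝ) ≤ t - τ₁),
          integral_Icc_eq_integral_Ioc]
      rw [hI, hI1, hI2, hzt, hx₂ _ ht₂, hx₁ τ₁ ⟨hτ₁.le, le_rfl⟩, add_assoc]
  -- Grönwall
  set g : ℝ → ℝ := fun t => ‖x t - z t‖ with hgdef
  have hxint : ∀ t, t ≤ T → IntegrableOn (fun s => f (x s) (w s)) (Icc (0:ℝ) t) := fun t htT =>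
    key _ measurableSet_Icc (hvolIcc _ _) x w
      (hx_meas.mono_measure (Measure.restrict_mono (Icc_subset_Icc le_rfl htT) le_rfl)) hw
  have hzint : ∀ t, t ≤ T → IntegrableOn (fun s => f (z s) (w s)) (Icc (0:ℝ) t) := fun t htT =>
    key _ measurableSet_Icc (hvolIcc _ _) z w
      (hz_meas.mono_measure (Measure.restrict_mono (Icc_subset_Icc le_rfl htT) le_rfl)) hw
  have hgsub : ∀ t ∈ Icc (0:ℝ) T, x t - z t
      = ∫ s in Icc (0:ℝ) t, (f (x s) (w s) - f (z s) (w s)) := by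
    intro t ht
    rw [hx t ht, hz t ht, integral_sub (hxint t ht.2) (hzint t ht.2)]
    abel
  have hb : ∀ t ∈ Icc (0:ℝ) T, g t ≤ 2 * M * T := by
    intro t ht
    rw [hgdef]
    simp only
    rw [hgsub t ht]
    have h1 : ‖∫ s in Icc (0:ℝ) t, (f (x s) (w s) - f (z s) (w s))‖
        ≤ (2 * M) * (volume (Icc (0:ℝ) t)).toReal := by
      apply norm_setIntegral_le_of_norm_le_const (hvolIcc _ _)
      · intro s hs
        calc ‖f (x s) (w s) - f (z s) (w s)‖ ≤ ‖f (x s) (w s)‖ + ‖f (z s) (w s)‖ :=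
          norm_sub_le _ _
        _ ≤ 2 * M := by have := hfBdd (x s) (w s); have := hfBdd (z s) (w s); linarith
    refine h1.trans ?_
    rw [Real.volume_Icc, ENNReal.toReal_ofReal (by linarith [ht.1] : (0:ℝ) ≤ t - 0)]
    have : t - 0 ≤ T := by linarith [ht.2]
    nlinarith
  have hg_meas : AEStronglyMeasurable g (volume.restrict (Icc (0:ℝ) T)) :=
    (hx_meas.sub hz_meas).norm
  have hgi : IntegrableOn g (Icc (0:ℝ) T) := by
    refine Integrable.mono' ((integrableOn_const_iff (C := 2 * M * T)).2 (Or.inr (hvolIcc _ _)))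
      hg_meas ?_
    refine (ae_restrict_iff' measurableSet_Icc).2 (ae_of_all _ fun s hs => ?_)
    rw [Real.norm_eq_abs, abs_of_nonneg (norm_nonneg _)]
    exact hb s hs
  have hrec : ∀ t ∈ Icc (0:ℝ) T, g t ≤ (Lf : ℝ) * ∫ s in Icc (0:ℝ) t, g s := by
    intro t ht
    rw [hgdef]
    simp only
    rw [hgsub t ht]
    calc ‖∫ s in Icc (0:ℝ) t, (f (x s) (w s) - f (z s) (w s))‖
        ≤ ∫ s in Icc (0:ℝ) t, ‖f (x s) (w s) - f (z s) (w s)‖ :=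
          norm_integral_le_integral_norm _
      _ ≤ ∫ s in Icc (0:ℝ) t, (Lf : ℝ) * g s := by
          refine setIntegral_mono_on (((hxint t ht.2).sub (hzint t ht.2)).norm) ?_
            measurableSet_Icc ?_
          · exact (hgi.mono_set (Icc_subset_Icc le_rfl ht.2)).const_mul _
          · intro s _
            have := (hfLip (w s)).dist_le_mul (x s) (z s)
            rw [dist_eq_norm, dist_eq_norm] at this
            exact this
      _ = (Lf : ℝ) * ∫ s in Icc (0:ℝ) t, g s := by
          rw [integral_const_mul]
  have hzero := gronwall_zero (Lf.coe_nonneg) hgi hb (fun t _ => norm_nonneg _) hrec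
  intro t ht
  have := hzero t ht
  rw [hgdef] at this
  simp only at this
  have : x t - z t = 0 := by rwa [norm_eq_zero] at this
  have := sub_eq_zero.1 this
  simpa [hzdef] using this
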